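/- Let b : ℝ → ℝ be a Schwartz function. Then for every x ∈ ℝ: ∫_ℝ G₂(x−y) b'''(y) b(y) dy = 4 ∫_ℝ G₂(x−y) b'(y) b(y) dy − b'(x) b(x) − (3/2) ∫_ℝ ∂_xG₂(x−y) (b'(y))² dy. -/

import Mathlib

open MeasureTheory

/-- The Green's function `G₂(x) = ¼ e^{-2|x|}` of `4 - ∂ₓ²`. -/
noncomputable def G2 (x : ℝ) : ℝ := (1 / 4) * Real.exp (-(2 * |x|))

/-- The derivative `∂ₓG₂(x) = -½ sgn(x) e^{-2|x|}`. -/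
noncomputable def G2x (x : ℝ) : ℝ := -(1 / 2) * Real.sign x * Real.exp (-(2 * |x|))

open Set Filter Real

section Aux

lemma schwartz_hasTemperateGrowth (f : SchwartzMap ℝ ℝ) : Function.HasTemperateGrowth ⇑f := by
  refine ⟨f.smooth ⊤, fun n => ?_⟩
  obtain ⟨C, -, hC⟩ := f.decay 0 n
  exact ⟨0, C, fun x => by simpa using hC x⟩

/-- Pointwise product of two Schwartz functions, as a Schwartz function. -/
noncomputable def mulS (f g : SchwartzMap ℝ ℝ) : SchwartzMap ℝ ℝ :=
  SchwartzMap.bilinLeftCLM (ContinuousLinearMap.mul ℝ ℝ) (schwartz_hasTemperateGrowth g) f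

lemma mulS_apply (f g : SchwartzMap ℝ ℝ) (x : ℝ) : mulS f g x = f x * g x := rfl

lemma measurable_realSign : Measurable Real.sign := by
  have h : Real.sign = fun r : ℝ => if r < 0 then (-1:ℝ) else if 0 < r then 1 else 0 := by
    funext r; rfl
  rw [h]
  exact Measurable.ite (measurableSet_lt measurable_id measurable_const) measurable_const
    (Measurable.ite (measurableSet_lt measurable_const measurable_id) measurable_const
      measurable_const)

lemma exp_neg_two_abs_le_one (z : ℝ) : Real.exp (-(2 * |z|)) ≤ 1 :=
  Real.exp_le_one_iff.mpr (neg_nonpos.mpr (by positivity))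

lemma G2_integrable (g : SchwartzMap ℝ ℝ) (x : ℝ) :
    Integrable (fun y => G2 (x - y) * g y) := by
  apply g.integrable.bdd_mul
  · exact (Continuous.aestronglyMeasurable (by unfold G2; continuity))
  · refine ae_of_all _ (fun y => show ‖G2 (x - y)‖ ≤ 1/4 from ?_)
    have h1 := exp_neg_two_abs_le_one (x - y)
    have h2 := Real.exp_pos (-(2 * |x - y|))
    simp only [G2, Real.norm_eq_abs]
    rw [abs_mul, abs_of_pos h2]
    rw [abs_of_pos (by norm_num : (0:ℝ) < 1/4)]
    nlinarith

lemma G2x_integrable (g : SchwartzMap ℝ ℝ) (x : ℝ) :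
    Integrable (fun y => G2x (x - y) * g y) := by
  apply g.integrable.bdd_mul
  · refine Measurable.aestronglyMeasurable ?_
    unfold G2x
    exact ((measurable_const.mul
        (measurable_realSign.comp (measurable_const.sub measurable_id))).mul
      ((Real.continuous_exp.comp (by continuity)).measurable))
  · refine ae_of_all _ (fun y => show ‖G2x (x - y)‖ ≤ 1/2 from ?_)
    set z := x - y
    have h1 := exp_neg_two_abs_le_one z
    have h2 := Real.exp_pos (-(2 * |z|))
    have hs : |Real.sign z| ≤ 1 := by
      rcases lt_trichotomy z 0 with h | h | h <;>
        simp [Real.sign_of_neg, Real.sign_of_pos, h]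
    simp only [G2x, Real.norm_eq_abs]
    rw [abs_mul, abs_mul, abs_of_pos h2]
    have : |(-(1/2) : ℝ)| = 1/2 := by norm_num
    rw [this]
    nlinarith [abs_nonneg (Real.sign z)]

lemma integrableOn_exp_mul_Iic_S (f : SchwartzMap ℝ ℝ) (x : ℝ) :
    IntegrableOn (fun y => Real.exp (2 * (y - x)) * f y) (Iic x) := by
  apply Integrable.mono' (f.integrable.norm.integrableOn)
  · exact (Continuous.aestronglyMeasurable
      ((Real.continuous_exp.comp (by continuity)).mul f.continuous)).restrict
  · filter_upwards [ae_restrict_mem measurableSet_Iic] with y hy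
    have h1 : Real.exp (2 * (y - x)) ≤ 1 :=
      Real.exp_le_one_iff.mpr (by simp only [mem_Iic] at hy; linarith)
    have h2 := Real.exp_pos (2 * (y - x))
    rw [Real.norm_eq_abs, abs_mul, abs_of_pos h2]
    calc Real.exp (2 * (y - x)) * |f y| ≤ 1 * |f y| := by
          apply mul_le_mul_of_nonneg_right h1 (abs_nonneg _)
      _ = ‖f y‖ := by rw [one_mul, Real.norm_eq_abs]

lemma integrableOn_exp_mul_Ioi_S (f : SchwartzMap ℝ ℝ) (x : ℝ) :
    IntegrableOn (fun y => Real.exp (2 * (x - y)) * f y) (Ioi x) := by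
  apply Integrable.mono' (f.integrable.norm.integrableOn)
  · exact (Continuous.aestronglyMeasurable
      ((Real.continuous_exp.comp (by continuity)).mul f.continuous)).restrict
  · filter_upwards [ae_restrict_mem measurableSet_Ioi] with y hy
    have h1 : Real.exp (2 * (x - y)) ≤ 1 :=
      Real.exp_le_one_iff.mpr (by simp only [mem_Ioi] at hy; linarith)
    have h2 := Real.exp_pos (2 * (x - y))
    rw [Real.norm_eq_abs, abs_mul, abs_of_pos h2]
    calc Real.exp (2 * (x - y)) * |f y| ≤ 1 * |f y| := by
          apply mul_le_mul_of_nonneg_right h1 (abs_nonneg _)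
      _ = ‖f y‖ := by rw [one_mul, Real.norm_eq_abs]

lemma tendsto_exp_mul_atBot (f : SchwartzMap ℝ ℝ) (x : ℝ) :
    Tendsto (fun y => Real.exp (2 * (y - x)) * f y) atBot (nhds 0) := by
  obtain ⟨C, -, hC⟩ := f.decay 0 0
  have hfb : ∀ y, ‖f y‖ ≤ C := fun y => by simpa using hC y
  have h1 : Tendsto (fun y : ℝ => 2 * (y - x)) atBot atBot := by
    apply tendsto_atBot_atBot.mpr
    intro c; exact ⟨c / 2 + x, fun a ha => by nlinarith⟩
  have h2 : Tendsto (fun y : ℝ => C * Real.exp (2 * (y - x))) atBot (nhds 0) := by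
    have := (Real.tendsto_exp_atBot.comp h1).const_mul C
    simpa using this
  apply squeeze_zero_norm _ h2
  intro y
  have h3 := Real.exp_pos (2 * (y - x))
  rw [Real.norm_eq_abs, abs_mul, abs_of_pos h3]
  calc Real.exp (2 * (y - x)) * |f y| ≤ Real.exp (2 * (y - x)) * C := by
        apply mul_le_mul_of_nonneg_left _ h3.le
        simpa [Real.norm_eq_abs] using hfb y
    _ = C * Real.exp (2 * (y - x)) := by ring

lemma tendsto_exp_mul_atTop (f : SchwartzMap ℝ ℝ) (x : ℝ) :
    Tendsto (fun y => Real.exp (2 * (x - y)) * f y) atTop (nhds 0) := by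
  obtain ⟨C, -, hC⟩ := f.decay 0 0
  have hfb : ∀ y, ‖f y‖ ≤ C := fun y => by simpa using hC y
  have h1 : Tendsto (fun y : ℝ => 2 * (x - y)) atTop atBot := by
    apply tendsto_atTop_atBot.mpr
    intro c; exact ⟨x - c / 2, fun a ha => by nlinarith⟩
  have h2 : Tendsto (fun y : ℝ => C * Real.exp (2 * (x - y))) atTop (nhds 0) := by
    have := (Real.tendsto_exp_atBot.comp h1).const_mul C
    simpa using this
  apply squeeze_zero_norm _ h2
  intro y
  have h3 := Real.exp_pos (2 * (x - y))
  rw [Real.norm_eq_abs, abs_mul, abs_of_pos h3]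
  calc Real.exp (2 * (x - y)) * |f y| ≤ Real.exp (2 * (x - y)) * C := by
        apply mul_le_mul_of_nonneg_left _ h3.le
        simpa [Real.norm_eq_abs] using hfb y
    _ = C * Real.exp (2 * (x - y)) := by ring

lemma deriv_eq_derivCLM (f : SchwartzMap ℝ ℝ) :
    deriv ⇑f = ⇑(SchwartzMap.derivCLM ℝ ℝ f) :=
  funext fun y => (SchwartzMap.derivCLM_apply ℝ f y).symm

lemma integrableOn_exp_mul_deriv_Iic (f : SchwartzMap ℝ ℝ) (x : ℝ) :
    IntegrableOn (fun y => Real.exp (2 * (y - x)) * deriv (⇑f) y) (Iic x) := by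
  rw [deriv_eq_derivCLM]
  exact integrableOn_exp_mul_Iic_S (SchwartzMap.derivCLM ℝ ℝ f) x

lemma integrableOn_exp_mul_deriv_Ioi (f : SchwartzMap ℝ ℝ) (x : ℝ) :
    IntegrableOn (fun y => Real.exp (2 * (x - y)) * deriv (⇑f) y) (Ioi x) := by
  rw [deriv_eq_derivCLM]
  exact integrableOn_exp_mul_Ioi_S (SchwartzMap.derivCLM ℝ ℝ f) x

lemma ibp_Iic (f : SchwartzMap ℝ ℝ) (x : ℝ) :
    ∫ y in Iic x, Real.exp (2 * (y - x)) * deriv (⇑f) y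
      = f x - 2 * ∫ y in Iic x, Real.exp (2 * (y - x)) * f y := by
  have hder : ∀ y ∈ Iic x, HasDerivAt (fun y => Real.exp (2 * (y - x)) * f y)
      (2 * Real.exp (2 * (y - x)) * f y + Real.exp (2 * (y - x)) * deriv (⇑f) y) y := by
    intro y _
    have h0 : HasDerivAt (fun y : ℝ => 2 * (y - x)) 2 y := by
      simpa using ((hasDerivAt_id y).sub_const x).const_mul 2
    have h1 : HasDerivAt (fun y : ℝ => Real.exp (2 * (y - x)))
        (2 * Real.exp (2 * (y - x))) y := by
      simpa [mul_comm] using h0.exp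
    exact h1.mul f.differentiable.differentiableAt.hasDerivAt
  have hint : IntegrableOn (fun y =>
      2 * Real.exp (2 * (y - x)) * f y + Real.exp (2 * (y - x)) * deriv (⇑f) y) (Iic x) := by
    apply Integrable.add
    · simpa [mul_assoc] using (integrableOn_exp_mul_Iic_S f x).const_mul 2
    · exact integrableOn_exp_mul_deriv_Iic f x
  have key := integral_Iic_of_hasDerivAt_of_tendsto' hder hint (tendsto_exp_mul_atBot f x)
  simp only [sub_self, mul_zero, Real.exp_zero, one_mul, sub_zero] at key
  rw [integral_add (by simpa [mul_assoc] using (integrableOn_exp_mul_Iic_S f x).const_mul 2)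
      (integrableOn_exp_mul_deriv_Iic f x)] at key
  have : ∫ y in Iic x, 2 * Real.exp (2 * (y - x)) * f y
      = 2 * ∫ y in Iic x, Real.exp (2 * (y - x)) * f y := by
    rw [← integral_const_mul]; congr 1; funext y; ring
  rw [this] at key
  linarith

lemma ibp_Ioi (f : SchwartzMap ℝ ℝ) (x : ℝ) :
    ∫ y in Ioi x, Real.exp (2 * (x - y)) * deriv (⇑f) y
      = -(f x) + 2 * ∫ y in Ioi x, Real.exp (2 * (x - y)) * f y := by
  have hder : ∀ y ∈ Ici x, HasDerivAt (fun y => Real.exp (2 * (x - y)) * f y)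
      (-2 * Real.exp (2 * (x - y)) * f y + Real.exp (2 * (x - y)) * deriv (⇑f) y) y := by
    intro y _
    have h0 : HasDerivAt (fun y : ℝ => 2 * (x - y)) (-2) y := by
      simpa using ((hasDerivAt_id y).const_sub x).const_mul 2
    have h1 : HasDerivAt (fun y : ℝ => Real.exp (2 * (x - y)))
        (-2 * Real.exp (2 * (x - y))) y := by
      simpa [mul_comm] using h0.exp
    exact h1.mul f.differentiable.differentiableAt.hasDerivAt
  have hint : IntegrableOn (fun y =>
      -2 * Real.exp (2 * (x - y)) * f y + Real.exp (2 * (x - y)) * deriv (⇑f) y) (Ioi x) := by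
    apply Integrable.add
    · simpa [mul_assoc] using (integrableOn_exp_mul_Ioi_S f x).const_mul (-2)
    · exact integrableOn_exp_mul_deriv_Ioi f x
  have key := integral_Ioi_of_hasDerivAt_of_tendsto' hder hint (tendsto_exp_mul_atTop f x)
  simp only [sub_self, mul_zero, Real.exp_zero, one_mul, zero_sub] at key
  rw [integral_add (by simpa [mul_assoc] using (integrableOn_exp_mul_Ioi_S f x).const_mul (-2))
      (integrableOn_exp_mul_deriv_Ioi f x)] at key
  have : ∫ y in Ioi x, -2 * Real.exp (2 * (x - y)) * f y
      = -2 * ∫ y in Ioi x, Real.exp (2 * (x - y)) * f y := by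
    rw [← integral_const_mul]; congr 1; funext y; ring
  rw [this] at key
  linarith

lemma G2_split (g : ℝ → ℝ) (x : ℝ) (hg : Integrable (fun y => G2 (x - y) * g y)) :
    ∫ y, G2 (x - y) * g y
      = (1/4) * (∫ y in Iic x, Real.exp (2 * (y - x)) * g y)
        + (1/4) * ∫ y in Ioi x, Real.exp (2 * (x - y)) * g y := by
  rw [← intervalIntegral.integral_Iic_add_Ioi hg.integrableOn hg.integrableOn]
  congr 1
  · rw [setIntegral_congr_fun measurableSet_Iic
      (show EqOn (fun y => G2 (x - y) * g y)
        (fun y => (1/4) * (Real.exp (2 * (y - x)) * g y)) (Iic x) from fun y hy => by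
          simp only [mem_Iic] at hy
          have h1 : |x - y| = x - y := abs_of_nonneg (by linarith)
          simp only [G2, h1, show -(2 * (x - y)) = 2 * (y - x) by ring]
          ring), integral_const_mul]
  · rw [setIntegral_congr_fun measurableSet_Ioi
      (show EqOn (fun y => G2 (x - y) * g y)
        (fun y => (1/4) * (Real.exp (2 * (x - y)) * g y)) (Ioi x) from fun y hy => by
          simp only [mem_Ioi] at hy
          have h1 : |x - y| = -(x - y) := abs_of_neg (by linarith)
          simp only [G2, h1, show -(2 * -(x - y)) = 2 * (x - y) by ring]
          ring), integral_const_mul]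

lemma G2x_split (g : ℝ → ℝ) (x : ℝ) (hg : Integrable (fun y => G2x (x - y) * g y)) :
    ∫ y, G2x (x - y) * g y
      = -(1/2) * (∫ y in Iic x, Real.exp (2 * (y - x)) * g y)
        + (1/2) * ∫ y in Ioi x, Real.exp (2 * (x - y)) * g y := by
  rw [← intervalIntegral.integral_Iic_add_Ioi hg.integrableOn hg.integrableOn]
  congr 1
  · rw [integral_Iic_eq_integral_Iio,
      setIntegral_congr_fun measurableSet_Iio
      (show EqOn (fun y => G2x (x - y) * g y)
        (fun y => -(1/2) * (Real.exp (2 * (y - x)) * g y)) (Iio x) from fun y hy => by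
          simp only [mem_Iio] at hy
          have h0 : (0:ℝ) < x - y := by linarith
          have h1 : |x - y| = x - y := abs_of_pos h0
          simp only [G2x, h1, Real.sign_of_pos h0,
            show -(2 * (x - y)) = 2 * (y - x) by ring]
          ring), integral_const_mul, ← integral_Iic_eq_integral_Iio]
  · rw [setIntegral_congr_fun measurableSet_Ioi
      (show EqOn (fun y => G2x (x - y) * g y)
        (fun y => (1/2) * (Real.exp (2 * (x - y)) * g y)) (Ioi x) from fun y hy => by
          simp only [mem_Ioi] at hy
          have h0 : x - y < 0 := by linarith
          have h1 : |x - y| = -(x - y) := abs_of_neg h0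
          simp only [G2x, h1, Real.sign_of_neg h0,
            show -(2 * -(x - y)) = 2 * (x - y) by ring]
          ring), integral_const_mul]

lemma G2_deriv_integrable (f : SchwartzMap ℝ ℝ) (x : ℝ) :
    Integrable (fun y => G2 (x - y) * deriv (⇑f) y) := by
  rw [deriv_eq_derivCLM]; exact G2_integrable (SchwartzMap.derivCLM ℝ ℝ f) x

lemma G2x_deriv_integrable (f : SchwartzMap ℝ ℝ) (x : ℝ) :
    Integrable (fun y => G2x (x - y) * deriv (⇑f) y) := by
  rw [deriv_eq_derivCLM]; exact G2x_integrable (SchwartzMap.derivCLM ℝ ℝ f) x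

lemma conv_deriv (f : SchwartzMap ℝ ℝ) (x : ℝ) :
    ∫ y, G2 (x - y) * deriv (⇑f) y = ∫ y, G2x (x - y) * f y := by
  rw [G2_split _ x (G2_deriv_integrable f x), G2x_split _ x (G2x_integrable f x),
    ibp_Iic f x, ibp_Ioi f x]
  ring

lemma conv_G2x_deriv (f : SchwartzMap ℝ ℝ) (x : ℝ) :
    ∫ y, G2x (x - y) * deriv (⇑f) y = 4 * (∫ y, G2 (x - y) * f y) - f x := by
  rw [G2x_split _ x (G2x_deriv_integrable f x), G2_split _ x (G2_integrable f x),
    ibp_Iic f x, ibp_Ioi f x]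
  ring

end Aux

/-- For a Schwartz function `b`,
`G₂∗(b''' b) = 4 G₂∗(b' b) - b' b - (3/2) ∂ₓG₂∗((b')²)`. -/
theorem G2_conv_bxxx_b_identity (b : SchwartzMap ℝ ℝ) :
    ∀ x : ℝ,
      (∫ y : ℝ, G2 (x - y) * (deriv (deriv (deriv (⇑b))) y * b y))
        = 4 * (∫ y : ℝ, G2 (x - y) * (deriv (⇑b) y * b y)) - deriv (⇑b) x * b x
          - (3 / 2) * ∫ y : ℝ, G2x (x - y) * (deriv (⇑b) y) ^ 2 := by
  intro x
  set b1 := SchwartzMap.derivCLM ℝ ℝ b with hb1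
  set b2 := SchwartzMap.derivCLM ℝ ℝ b1 with hb2
  have e1 : deriv (⇑b) = ⇑b1 := deriv_eq_derivCLM b
  have e2 : deriv (⇑b1) = ⇑b2 := deriv_eq_derivCLM b1
  set h := mulS b1 b with hh'
  set k := mulS b1 b1 with hk'
  have hh : ⇑h = fun y => b1 y * b y := rfl
  have hk : ⇑k = fun y => b1 y * b1 y := rfl
  have hd : deriv ⇑h = fun y => b2 y * b y + b1 y * b1 y := by
    funext y
    rw [hh, deriv_fun_mul b1.differentiable.differentiableAt b.differentiable.differentiableAt,
      e1, e2]
  have hkd : deriv ⇑k = fun y => b2 y * b1 y + b1 y * b2 y := by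
    funext y
    rw [hk, deriv_fun_mul b1.differentiable.differentiableAt b1.differentiable.differentiableAt, e2]
  have hhd2 : ∀ y, deriv (deriv ⇑h) y
      = (deriv ⇑b2 y * b y + b2 y * b1 y) + (b2 y * b1 y + b1 y * b2 y) := by
    intro y
    rw [hd, deriv_fun_add (f := fun y => b2 y * b y) (g := fun y => b1 y * b1 y)
      (b2.differentiable.differentiableAt.mul b.differentiable.differentiableAt)
      (b1.differentiable.differentiableAt.mul b1.differentiable.differentiableAt),
      deriv_fun_mul b2.differentiable.differentiableAt b.differentiable.differentiableAt,
      deriv_fun_mul b1.differentiable.differentiableAt b1.differentiable.differentiableAt,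
      e1, e2]
  have key : ∀ y, deriv (deriv (deriv (⇑b))) y * b y
      = deriv (deriv ⇑h) y - (3/2) * deriv ⇑k y := by
    intro y
    rw [e1, e2, hhd2 y, hkd]
    ring
  -- integrability facts
  have hdd : deriv (deriv ⇑h) = ⇑(SchwartzMap.derivCLM ℝ ℝ (SchwartzMap.derivCLM ℝ ℝ h)) := by
    rw [deriv_eq_derivCLM h, deriv_eq_derivCLM]
  have hint1 : Integrable (fun y => G2 (x - y) * deriv (deriv ⇑h) y) := by
    rw [hdd]; exact G2_integrable _ x
  have hint2 : Integrable (fun y => G2 (x - y) * deriv ⇑k y) := G2_deriv_integrable k x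
  calc (∫ y : ℝ, G2 (x - y) * (deriv (deriv (deriv (⇑b))) y * b y))
      = ∫ y : ℝ, (G2 (x - y) * deriv (deriv ⇑h) y
          - (3/2) * (G2 (x - y) * deriv ⇑k y)) := by
        congr 1; funext y; rw [key y]; ring
    _ = (∫ y, G2 (x - y) * deriv (deriv ⇑h) y)
          - (3/2) * ∫ y, G2 (x - y) * deriv ⇑k y := by
        rw [integral_sub hint1 (hint2.const_mul (3/2)), integral_const_mul]
    _ = (4 * (∫ y, G2 (x - y) * h y) - h x)
          - (3/2) * ∫ y, G2x (x - y) * k y := by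
        congr 1
        · have e3 : deriv (deriv ⇑h) = deriv ⇑(SchwartzMap.derivCLM ℝ ℝ h) := by
            rw [deriv_eq_derivCLM h]
          rw [e3, conv_deriv (SchwartzMap.derivCLM ℝ ℝ h) x]
          have e4 : (fun y => G2x (x - y) * (SchwartzMap.derivCLM ℝ ℝ h) y)
              = fun y => G2x (x - y) * deriv ⇑h y := by
            funext y; rw [SchwartzMap.derivCLM_apply]
          rw [e4, conv_G2x_deriv h x]
        · rw [conv_deriv k x]
    _ = 4 * (∫ y : ℝ, G2 (x - y) * (deriv (⇑b) y * b y)) - deriv (⇑b) x * b x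
          - (3 / 2) * ∫ y : ℝ, G2x (x - y) * (deriv (⇑b) y) ^ 2 := by
        have q1 : (fun y => G2 (x - y) * h y)
            = fun y => G2 (x - y) * (deriv (⇑b) y * b y) := by
          funext y; rw [hh]; simp only [e1]
        have q2 : (fun y => G2x (x - y) * k y)
            = fun y => G2x (x - y) * (deriv (⇑b) y) ^ 2 := by
          funext y; rw [hk]; simp only [e1]; ring
        rw [q1, q2, hh]
        simp only [e1]
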